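/- Let n ≥ 1, let A be an IFM of order n and let λ ∈ [0,1). Then the powers of A under the ∗ operation converge: for all i, j, the real sequences m ↦ (A^m)μ i j and m ↦ (A^m)ν i j each converge to a limit. -/
import Mathlib


open Filter Topology

/-- Membership scalar operation of the convex combination of max-min and
maxarithmetic mean–minarithmetic mean: `x ⊛ y = λ·min(x,y) + (1-λ)·(x+y)/2`. -/
noncomputable def starMu (lam x y : ℝ) : ℝ :=
  lam * min x y + (1 - lam) * ((x + y) / 2)

/-- Non-membership scalar operation:
`x ⊛' y = λ·max(x,y) + (1-λ)·(x+y)/2`. -/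
noncomputable def starNu (lam x y : ℝ) : ℝ :=
  lam * max x y + (1 - lam) * ((x + y) / 2)

/-- `A` (given by membership part `Amu` and non-membership part `Anu`) is an
intuitionistic fuzzy matrix. -/
def IsIFM (n : ℕ) (Amu Anu : Fin n → Fin n → ℝ) : Prop :=
  ∀ i j, 0 ≤ Amu i j ∧ 0 ≤ Anu i j ∧ Amu i j + Anu i j ≤ 1

/-- Powers of an IFM under the convex combination `∗` of the max-min and the
maxarithmetic mean–minarithmetic mean operations: `A^1 = A`,
`A^(k+1) = A^k ∗ A` with
`(X ∗ A)μ i j = max_t (Xμ i t ⊛ Aμ t j)` and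
`(X ∗ A)ν i j = min_t (Xν i t ⊛' Aν t j)`.
(The value at `0` is irrelevant; it is set to `A`.) -/
noncomputable def sPow (n : ℕ) (lam : ℝ) (Amu Anu : Fin n → Fin n → ℝ) :
    ℕ → (Fin n → Fin n → ℝ) × (Fin n → Fin n → ℝ)
  | 0 => (Amu, Anu)
  | 1 => (Amu, Anu)
  | m + 2 =>
    let X := sPow n lam Amu Anu (m + 1)
    (fun i j => ⨆ t : Fin n, starMu lam (X.1 i t) (Amu t j),
     fun i j => ⨅ t : Fin n, starNu lam (X.2 i t) (Anu t j))

/-- Scalar Lipschitz bound for `starMu` in its first argument. -/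
lemma starMu_lip (lam a x y : ℝ) (h0 : 0 ≤ lam) (h1 : lam ≤ 1) :
    |starMu lam x a - starMu lam y a| ≤ (1 + lam) / 2 * |x - y| := by
  have hmin : |min x a - min y a| ≤ |x - y| := by
    have := abs_min_sub_min_le_max x a y a
    simpa using this
  have : starMu lam x a - starMu lam y a
      = lam * (min x a - min y a) + (1 - lam) / 2 * (x - y) := by
    unfold starMu; ring
  rw [this]
  calc |lam * (min x a - min y a) + (1 - lam) / 2 * (x - y)|
      ≤ |lam * (min x a - min y a)| + |(1 - lam) / 2 * (x - y)| := abs_add_le _ _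
    _ = lam * |min x a - min y a| + |(1 - lam) / 2| * |x - y| := by
        rw [abs_mul, abs_mul, abs_of_nonneg h0]
    _ ≤ (1 + lam) / 2 * |x - y| := by
        rcases abs_cases ((1 - lam) / 2) with ⟨he, _⟩ | ⟨he, _⟩ <;> rw [he] <;>
          nlinarith [abs_nonneg (x - y), abs_nonneg (min x a - min y a)]

/-- Scalar Lipschitz bound for `starNu` in its first argument. -/
lemma starNu_lip (lam a x y : ℝ) (h0 : 0 ≤ lam) (h1 : lam ≤ 1) :
    |starNu lam x a - starNu lam y a| ≤ (1 + lam) / 2 * |x - y| := by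
  have hmax : |max x a - max y a| ≤ |x - y| := abs_max_sub_max_le_abs x y a
  have : starNu lam x a - starNu lam y a
      = lam * (max x a - max y a) + (1 - lam) / 2 * (x - y) := by
    unfold starNu; ring
  rw [this]
  calc |lam * (max x a - max y a) + (1 - lam) / 2 * (x - y)|
      ≤ |lam * (max x a - max y a)| + |(1 - lam) / 2 * (x - y)| := abs_add_le _ _
    _ = lam * |max x a - max y a| + |(1 - lam) / 2| * |x - y| := by
        rw [abs_mul, abs_mul, abs_of_nonneg h0]
    _ ≤ (1 + lam) / 2 * |x - y| := by
        rcases abs_cases ((1 - lam) / 2) with ⟨he, _⟩ | ⟨he, _⟩ <;> rw [he] <;>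
          nlinarith [abs_nonneg (x - y), abs_nonneg (max x a - max y a)]

lemma abs_ciSup_sub_ciSup_le {n : ℕ} [NeZero n] (f g : Fin n → ℝ) (c : ℝ)
    (h : ∀ t, |f t - g t| ≤ c) : |(⨆ t, f t) - ⨆ t, g t| ≤ c := by
  have hle : ∀ (f g : Fin n → ℝ), (∀ t, |f t - g t| ≤ c) →
      (⨆ t, f t) - (⨆ t, g t) ≤ c := by
    intro f g h
    rw [sub_le_iff_le_add]
    refine ciSup_le fun t => ?_
    have := le_ciSup (Set.Finite.bddAbove (Set.finite_range g)) t
    have h2 := (abs_le.1 (h t)).2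
    linarith
  have h1 := hle f g h
  have h2 := hle g f (fun t => by rw [abs_sub_comm]; exact h t)
  rw [abs_le]; constructor <;> linarith

lemma abs_ciInf_sub_ciInf_le {n : ℕ} [NeZero n] (f g : Fin n → ℝ) (c : ℝ)
    (h : ∀ t, |f t - g t| ≤ c) : |(⨅ t, f t) - ⨅ t, g t| ≤ c := by
  have hle : ∀ (f g : Fin n → ℝ), (∀ t, |f t - g t| ≤ c) →
      (⨅ t, f t) - (⨅ t, g t) ≤ c := by
    intro f g h
    obtain ⟨t, ht⟩ := exists_eq_ciInf_of_finite (f := g)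
    have h1 : (⨅ t, f t) ≤ f t := ciInf_le (Set.Finite.bddBelow (Set.finite_range f)) t
    have h2 := (abs_le.1 (h t)).2
    linarith [ht.symm ▸ h2]
  have h1 := hle f g h
  have h2 := hle g f (fun t => by rw [abs_sub_comm]; exact h t)
  rw [abs_le]; constructor <;> linarith

/-- Theorem 4.5 (first part): the powers of an IFM under the `∗` operation
converge entrywise. -/
theorem sPow_converges (n : ℕ) (hn : 1 ≤ n)
    (Amu Anu : Fin n → Fin n → ℝ) (hA : IsIFM n Amu Anu)
    (lam : ℝ) (hlam : lam ∈ Set.Ico (0 : ℝ) 1) (i j : Fin n) :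
    (∃ L : ℝ, Tendsto (fun m => (sPow n lam Amu Anu m).1 i j) atTop (𝓝 L)) ∧
      ∃ M : ℝ, Tendsto (fun m => (sPow n lam Amu Anu m).2 i j) atTop (𝓝 M) := by
  haveI : NeZero n := ⟨Nat.one_le_iff_ne_zero.mp hn⟩
  obtain ⟨h0, h1⟩ := hlam
  set K : NNReal := ⟨(1 + lam) / 2, by linarith⟩ with hK
  have hKlt : K < 1 := by
    rw [← NNReal.coe_lt_coe]
    show (1 + lam) / 2 < 1
    linarith
  have hKc : (K : ℝ) = (1 + lam) / 2 := rfl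
  -- the two iteration maps
  set Tmu : (Fin n → Fin n → ℝ) → (Fin n → Fin n → ℝ) :=
    fun X i j => ⨆ t : Fin n, starMu lam (X i t) (Amu t j) with hTmu
  set Tnu : (Fin n → Fin n → ℝ) → (Fin n → Fin n → ℝ) :=
    fun X i j => ⨅ t : Fin n, starNu lam (X i t) (Anu t j) with hTnu
  have key : ∀ (T : (Fin n → Fin n → ℝ) → (Fin n → Fin n → ℝ)),
      ContractingWith K T → ∀ X₀ : Fin n → Fin n → ℝ,
      ∃ L : ℝ, Tendsto (fun m => T^[m] X₀ i j) atTop (𝓝 L) := by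
    intro T hT X₀
    refine ⟨hT.fixedPoint T i j, ?_⟩
    have := hT.tendsto_iterate_fixedPoint X₀
    have h2 := (tendsto_pi_nhds.1 this) i
    exact (tendsto_pi_nhds.1 h2) j
  have hentry : ∀ (X Y : Fin n → Fin n → ℝ) (a b : Fin n),
      |X a b - Y a b| ≤ dist X Y := by
    intro X Y a b
    calc |X a b - Y a b| = dist (X a b) (Y a b) := (Real.dist_eq _ _)
      _ ≤ dist (X a) (Y a) := dist_le_pi_dist (X a) (Y a) b
      _ ≤ dist X Y := dist_le_pi_dist X Y a
  have hlipmu : ContractingWith K Tmu := by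
    refine ⟨hKlt, LipschitzWith.of_dist_le_mul fun X Y => ?_⟩
    rw [dist_pi_le_iff (by positivity)]
    intro a
    rw [dist_pi_le_iff (by positivity)]
    intro b
    rw [Real.dist_eq]
    refine abs_ciSup_sub_ciSup_le _ _ _ fun t => ?_
    calc |starMu lam (X a t) (Amu t b) - starMu lam (Y a t) (Amu t b)|
        ≤ (1 + lam) / 2 * |X a t - Y a t| := starMu_lip lam _ _ _ h0 h1.le
      _ ≤ (K : ℝ) * dist X Y := by
          rw [hKc]
          exact mul_le_mul_of_nonneg_left (hentry X Y a t) (by linarith)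
  have hlipnu : ContractingWith K Tnu := by
    refine ⟨hKlt, LipschitzWith.of_dist_le_mul fun X Y => ?_⟩
    rw [dist_pi_le_iff (by positivity)]
    intro a
    rw [dist_pi_le_iff (by positivity)]
    intro b
    rw [Real.dist_eq]
    refine abs_ciInf_sub_ciInf_le _ _ _ fun t => ?_
    calc |starNu lam (X a t) (Anu t b) - starNu lam (Y a t) (Anu t b)|
        ≤ (1 + lam) / 2 * |X a t - Y a t| := starNu_lip lam _ _ _ h0 h1.le
      _ ≤ (K : ℝ) * dist X Y := by
          rw [hKc]
          exact mul_le_mul_of_nonneg_left (hentry X Y a t) (by linarith)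
  have hiter : ∀ m, (sPow n lam Amu Anu (m + 1)).1 = Tmu^[m] Amu ∧
      (sPow n lam Amu Anu (m + 1)).2 = Tnu^[m] Anu := by
    intro m
    induction m with
    | zero => exact ⟨rfl, rfl⟩
    | succ k ih =>
      constructor
      · show (fun i j => ⨆ t : Fin n,
            starMu lam ((sPow n lam Amu Anu (k + 1)).1 i t) (Amu t j)) = _
        rw [ih.1, Function.iterate_succ_apply']
      · show (fun i j => ⨅ t : Fin n,
            starNu lam ((sPow n lam Amu Anu (k + 1)).2 i t) (Anu t j)) = _
        rw [ih.2, Function.iterate_succ_apply']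
  obtain ⟨L, hL⟩ := key Tmu hlipmu Amu
  obtain ⟨M, hM⟩ := key Tnu hlipnu Anu
  constructor
  · refine ⟨L, (tendsto_add_atTop_iff_nat 1).1 ?_⟩
    have heq : (fun m => (sPow n lam Amu Anu (m + 1)).1 i j)
        = fun m => Tmu^[m] Amu i j := funext fun m => by rw [(hiter m).1]
    rw [heq]; exact hL
  · refine ⟨M, (tendsto_add_atTop_iff_nat 1).1 ?_⟩
    have heq : (fun m => (sPow n lam Amu Anu (m + 1)).2 i j)
        = fun m => Tnu^[m] Anu i j := funext fun m => by rw [(hiter m).2]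
    rw [heq]; exact hM
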